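/- arXiv:1603.07850 — 8 statements merged into one kernel-verified Lean document; each statement's English description precedes it below -/
import Mathlib

section
/- A set B ⊆ D⁺ is a Markov substitute set of P if and only if every two-element subset {y, y'} ⊆ B is a Markov substitute set of P. -/
def IsMarkovSet {D : Type*} (𝒟 : Set (List D)) (P : List D → ℝ) (B : Set (List D)) : Prop :=
  ∃ β : List D → List D → ℝ,
    (∀ y ∈ B, ∀ y' ∈ B, β y y' = - β y' y) ∧
    ∀ (x₁ x₂ : List D), ∀ y ∈ B, ∀ y' ∈ B,
      x₁ ++ y ++ x₂ ∈ 𝒟 → x₁ ++ y' ++ x₂ ∈ 𝒟 →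
      P (x₁ ++ y' ++ x₂) = P (x₁ ++ y ++ x₂) * Real.exp (β y y')

theorem stmt2 {D : Type*} [Fintype D] (𝒟 : Set (List D)) (P : List D → ℝ)
    (B : Set (List D)) :
    IsMarkovSet 𝒟 P B ↔ ∀ y ∈ B, ∀ y' ∈ B, IsMarkovSet 𝒟 P {y, y'} := by
  constructor
  · rintro ⟨β, hskew, hsub⟩ y hy y' hy'
    have hmem : ∀ a ∈ ({y, y'} : Set (List D)), a ∈ B := by
      rintro a (rfl | rfl) <;> assumption
    exact ⟨β, fun a ha b hb => hskew a (hmem a ha) b (hmem b hb),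
      fun x₁ x₂ a ha b hb h1 h2 => hsub x₁ x₂ a (hmem a ha) b (hmem b hb) h1 h2⟩
  · intro h
    classical
    set f : Set (List D) → List D → List D → ℝ :=
      fun S => if hS : IsMarkovSet 𝒟 P S then Classical.choose hS else 0 with hf
    refine ⟨fun y y' => f {y, y'} y y', ?_, ?_⟩
    · intro y hy y' hy'
      have hpair := h y hy y' hy'
      have heq : ({y', y} : Set (List D)) = {y, y'} := Set.pair_comm y' y
      show f {y, y'} y y' = - f {y', y} y' y
      rw [heq]
      simp only [hf, dif_pos hpair]
      exact (Classical.choose_spec hpair).1 y (Or.inl rfl) y' (Or.inr rfl)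
    · intro x₁ x₂ y hy y' hy' h1 h2
      have hpair := h y hy y' hy'
      show _ = _ * Real.exp (f {y, y'} y y')
      simp only [hf, dif_pos hpair]
      exact (Classical.choose_spec hpair).2 x₁ x₂ y (Or.inl rfl) y' (Or.inr rfl) h1 h2
end

section
/- If B ⊆ D⁺ is a Markov substitute set of P and x ∈ (D*)² is a fixed context, then α(x, B) = {α(x, y) : y ∈ B} is also a Markov substitute set of P, with substitute exponent β(α(x,y), α(x,y')) = β(y,y'). -/
theorem stmt3 {D : Type*} [Fintype D] (𝒟 : Set (List D)) (P : List D → ℝ)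
    (B : Set (List D)) (β : List D → List D → ℝ)
    (hskew : ∀ y ∈ B, ∀ y' ∈ B, β y y' = - β y' y)
    (hsub : ∀ (z₁ z₂ : List D), ∀ y ∈ B, ∀ y' ∈ B,
      z₁ ++ y ++ z₂ ∈ 𝒟 → z₁ ++ y' ++ z₂ ∈ 𝒟 →
      P (z₁ ++ y' ++ z₂) = P (z₁ ++ y ++ z₂) * Real.exp (β y y'))
    (x₁ x₂ : List D) :
    ∃ β' : List D → List D → ℝ,
      (∀ u ∈ {s : List D | ∃ y ∈ B, s = x₁ ++ y ++ x₂},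
        ∀ v ∈ {s : List D | ∃ y ∈ B, s = x₁ ++ y ++ x₂}, β' u v = - β' v u) ∧
      (∀ (z₁ z₂ : List D), ∀ u ∈ {s : List D | ∃ y ∈ B, s = x₁ ++ y ++ x₂},
        ∀ v ∈ {s : List D | ∃ y ∈ B, s = x₁ ++ y ++ x₂},
        z₁ ++ u ++ z₂ ∈ 𝒟 → z₁ ++ v ++ z₂ ∈ 𝒟 →
        P (z₁ ++ v ++ z₂) = P (z₁ ++ u ++ z₂) * Real.exp (β' u v)) ∧
      (∀ y ∈ B, ∀ y' ∈ B, β' (x₁ ++ y ++ x₂) (x₁ ++ y' ++ x₂) = β y y') := by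
  set strip : List D → List D :=
    fun u => (u.drop x₁.length).take (u.length - x₁.length - x₂.length) with hstripdef
  have hstrip : ∀ y : List D, strip (x₁ ++ y ++ x₂) = y := by
    intro y
    have hlen : (x₁ ++ y ++ x₂).length - x₁.length - x₂.length = y.length := by
      simp [List.length_append]
    have hdrop : (x₁ ++ y ++ x₂).drop x₁.length = y ++ x₂ := by
      rw [List.append_assoc, List.drop_left]
    simp [hstripdef, hlen, hdrop, List.take_left]
  refine ⟨fun u v => β (strip u) (strip v), ?_, ?_, ?_⟩
  · rintro u ⟨y, hy, rfl⟩ v ⟨y', hy', rfl⟩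
    simp only [hstrip]
    exact hskew y hy y' hy'
  · rintro z₁ z₂ u ⟨y, hy, rfl⟩ v ⟨y', hy', rfl⟩ h1 h2
    simp only [hstrip]
    have := hsub (z₁ ++ x₁) (x₂ ++ z₂) y hy y' hy'
    simp only [List.append_assoc] at this h1 h2 ⊢
    exact this h1 h2
  · intro y hy y' hy'
    simp only [hstrip]
end

section
/- Given any domain 𝒟 ⊆ D⁺, any family 𝓑 of subsets of D⁺, any finite set 𝒞 of equivalence classes of ∼_𝓑 on 𝒟, any everywhere-positive strict sub-probability ξ on D, and any probability measure μ on 𝒞 with full support, the measure P(s) = Σ_{C ∈ 𝒞} 1(s ∈ C)·μ(C)·P̃(s | s ∈ C) (where P̃ is the independent process from ξ) is a 𝓑-Markov substitute measure on 𝒟 with support exactly ⋃_{C∈𝒞} C. -/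
def SubstRel {D : Type*} (𝒟 : Set (List D)) (𝓑 : Set (Set (List D)))
    (s s' : List D) : Prop :=
  s ∈ 𝒟 ∧ s' ∈ 𝒟 ∧ ∃ (x₁ x₂ : List D) (B : Set (List D)), B ∈ 𝓑 ∧
    ∃ y ∈ B, ∃ y' ∈ B, s = x₁ ++ y ++ x₂ ∧ s' = x₁ ++ y' ++ x₂

noncomputable def indepP {D : Type*} (ξ : D → ℝ) (r : ℝ) (s : List D) : ℝ :=
  match s with
  | [] => 0
  | _ :: _ => (r / (1 - r)) * (s.map ξ).prod

/-! ### Auxiliary lemmas -/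

lemma summable_listProd {D : Type*} [Fintype D] (ξ : D → ℝ) (hpos : ∀ w, 0 < ξ w)
    (hlt : ∑ w, ξ w < 1) : Summable (fun s : List D => (s.map ξ).prod) := by
  classical
  have hnn : ∀ s : List D, 0 ≤ (s.map ξ).prod := fun s =>
    List.prod_nonneg (by
      intro x hx
      obtain ⟨w, _, rfl⟩ := List.mem_map.1 hx
      exact (hpos w).le)
  have hq0 : (0:ℝ) ≤ ∑ w, ξ w := Finset.sum_nonneg fun w _ => (hpos w).le
  have key : Summable ((fun s : List D => (s.map ξ).prod) ∘ (List.equivSigmaTuple (α := D)).symm) := by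
    refine (summable_sigma_of_nonneg (fun x => hnn _)).2 ⟨?_, ?_⟩
    · exact fun n => Summable.of_finite
    have hval : ∀ n : ℕ, (∑' g : Fin n → D,
        ((fun s : List D => (s.map ξ).prod) ∘ (List.equivSigmaTuple (α := D)).symm) ⟨n, g⟩)
        = (∑ w, ξ w) ^ n := by
      intro n
      rw [tsum_fintype]
      have : ∀ g : Fin n → D,
          ((fun s : List D => (s.map ξ).prod) ∘ (List.equivSigmaTuple (α := D)).symm) ⟨n, g⟩
          = ∏ i, ξ (g i) := by
        intro g
        show ((List.ofFn g).map ξ).prod = _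
        rw [List.map_ofFn, List.prod_ofFn]
        rfl
      simp_rw [this]
      rw [← Fintype.piFinset_univ, ← Finset.prod_univ_sum]
      simp
    exact (summable_geometric_of_lt_one hq0 hlt).congr fun n => (hval n).symm
  exact ((List.equivSigmaTuple (α := D)).symm.summable_iff).1 key

lemma mem_of_eqvGen {D : Type*} {𝒟 : Set (List D)} {𝓑 : Set (Set (List D))} {a b : List D}
    (h : Relation.EqvGen (SubstRel 𝒟 𝓑) a b) : a = b ∨ (a ∈ 𝒟 ∧ b ∈ 𝒟) := by
  induction h with
  | rel x y h => exact Or.inr ⟨h.1, h.2.1⟩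
  | refl x => exact Or.inl rfl
  | symm x y h ih => rcases ih with h' | ⟨h1, h2⟩; exacts [Or.inl h'.symm, Or.inr ⟨h2, h1⟩]
  | trans x y z h1 h2 ih1 ih2 =>
    rcases ih1 with rfl | ⟨ha, hb⟩
    · exact ih2
    · rcases ih2 with rfl | ⟨hb', hc⟩
      · exact Or.inr ⟨ha, hb⟩
      · exact Or.inr ⟨ha, hc⟩

theorem stmt10 {D : Type*} [Fintype D] [Nonempty D]
    (𝒟 : Set (List D)) (h𝒟 : ∀ s ∈ 𝒟, s ≠ ([] : List D))
    (𝓑 : Set (Set (List D)))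
    (ξ : D → ℝ) (hξpos : ∀ w, 0 < ξ w) (hξlt : ∑ w, ξ w < 1)
    (𝒞 : Finset (Set (List D)))
    (hclass : ∀ C ∈ 𝒞, ∃ s₀ ∈ 𝒟, C = {t | Relation.EqvGen (SubstRel 𝒟 𝓑) s₀ t})
    (μ : Set (List D) → ℝ) (hμpos : ∀ C ∈ 𝒞, 0 < μ C) (hμ1 : ∑ C ∈ 𝒞, μ C = 1) :
    letI r : ℝ := 1 - ∑ w, ξ w
    letI Pt : List D → ℝ := indepP ξ r
    letI Z : Set (List D) → ℝ := fun C => ∑' t : List D, Set.indicator C Pt t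
    letI P : List D → ℝ := fun s => ∑ C ∈ 𝒞, Set.indicator C (fun t => μ C * Pt t / Z C) s
    (∀ s, 0 ≤ P s) ∧ (∑' s : List D, P s) = 1 ∧ (∀ s, P s ≠ 0 → s ∈ 𝒟) ∧
      (∀ B ∈ 𝓑, IsMarkovSet 𝒟 P B) ∧
      {s | P s ≠ 0} = ⋃ C ∈ 𝒞, (C : Set (List D)) := by
  classical
  set Pt : List D → ℝ := indepP ξ (1 - ∑ w, ξ w) with hPtdef
  set Z : Set (List D) → ℝ := fun C => ∑' t : List D, Set.indicator C Pt t with hZdef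
  set P : List D → ℝ := fun s => ∑ C ∈ 𝒞, Set.indicator C (fun t => μ C * Pt t / Z C) s
    with hPdef
  -- basic positivity facts
  have hq0 : (0:ℝ) < ∑ w, ξ w := Finset.sum_pos (fun w _ => hξpos w) Finset.univ_nonempty
  have hr0 : (0:ℝ) < 1 - ∑ w, ξ w := by linarith
  have hrr : 1 - (1 - ∑ w, ξ w) = ∑ w, ξ w := by ring
  have hprodpos : ∀ s : List D, 0 < (s.map ξ).prod := by
    intro s
    apply List.prod_pos
    intro x hx
    obtain ⟨w, _, rfl⟩ := List.mem_map.1 hx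
    exact hξpos w
  have hc0 : 0 < (1 - ∑ w, ξ w) / (1 - (1 - ∑ w, ξ w)) := by
    rw [hrr]; exact div_pos hr0 hq0
  have hPt_eq : ∀ s : List D, s ≠ [] →
      Pt s = ((1 - ∑ w, ξ w) / (1 - (1 - ∑ w, ξ w))) * (s.map ξ).prod := by
    intro s hs
    cases s with
    | nil => exact absurd rfl hs
    | cons a t => rfl
  have hPt_nonneg : ∀ s : List D, 0 ≤ Pt s := by
    intro s
    cases s with
    | nil => exact le_refl 0
    | cons a t => exact (mul_pos hc0 (hprodpos _)).le
  have hPt_pos : ∀ s : List D, s ≠ [] → 0 < Pt s := by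
    intro s hs
    rw [hPt_eq s hs]
    exact mul_pos hc0 (hprodpos _)
  have hfs : Summable (fun s : List D => (s.map ξ).prod) := summable_listProd ξ hξpos hξlt
  have hPtsummable : Summable Pt := by
    refine Summable.of_nonneg_of_le
      (f := fun s : List D => ((1 - ∑ w, ξ w) / (1 - (1 - ∑ w, ξ w))) * (s.map ξ).prod)
      hPt_nonneg ?_ (hfs.mul_left _)
    intro s
    cases s with
    | nil => exact (mul_pos hc0 (hprodpos _)).le
    | cons a t => exact le_of_eq rfl
  -- per-class facts
  have hindnn : ∀ (C : Set (List D)) (t : List D), 0 ≤ Set.indicator C Pt t :=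
    fun C t => Set.indicator_nonneg (fun u _ => hPt_nonneg u) t
  have hCfacts : ∀ C ∈ 𝒞, C ⊆ 𝒟 ∧ 0 < Z C := by
    intro C hC
    obtain ⟨s₀, hs₀𝒟, rfl⟩ := hclass C hC
    have hs₀C : s₀ ∈ {t | Relation.EqvGen (SubstRel 𝒟 𝓑) s₀ t} :=
      Relation.EqvGen.refl s₀
    constructor
    · intro t ht
      rcases mem_of_eqvGen ht with rfl | ⟨_, h⟩
      · exact hs₀𝒟
      · exact h
    · have hle : Set.indicator {t | Relation.EqvGen (SubstRel 𝒟 𝓑) s₀ t} Pt s₀ ≤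
          Z {t | Relation.EqvGen (SubstRel 𝒟 𝓑) s₀ t} :=
        Summable.le_tsum (hPtsummable.indicator _) s₀ (fun j _ => hindnn _ j)
      rw [Set.indicator_of_mem hs₀C] at hle
      exact lt_of_lt_of_le (hPt_pos s₀ (h𝒟 s₀ hs₀𝒟)) hle
  have hclosed : ∀ C ∈ 𝒞, ∀ a b : List D, SubstRel 𝒟 𝓑 a b → (a ∈ C ↔ b ∈ C) := by
    intro C hC a b hab
    obtain ⟨s₀, hs₀𝒟, rfl⟩ := hclass C hC
    constructor
    · intro ha
      exact Relation.EqvGen.trans _ _ _ ha (Relation.EqvGen.rel _ _ hab)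
    · intro hb
      exact Relation.EqvGen.trans _ _ _ hb
        (Relation.EqvGen.symm _ _ (Relation.EqvGen.rel _ _ hab))
  -- rewriting indicators
  have hind : ∀ C : Set (List D), Set.indicator C (fun t => μ C * Pt t / Z C)
      = fun t => (μ C / Z C) * Set.indicator C Pt t := by
    intro C
    funext t
    by_cases ht : t ∈ C
    · rw [Set.indicator_of_mem ht, Set.indicator_of_mem ht]; ring
    · rw [Set.indicator_of_notMem ht, Set.indicator_of_notMem ht, mul_zero]
  have hsummC : ∀ C : Set (List D),
      Summable (Set.indicator C (fun t => μ C * Pt t / Z C)) := by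
    intro C
    rw [hind C]
    exact (hPtsummable.indicator C).mul_left _
  -- nonnegativity of P
  have hPnonneg : ∀ s, 0 ≤ P s := by
    intro s
    apply Finset.sum_nonneg
    intro C hC
    rw [hind C]
    exact mul_nonneg (div_nonneg (hμpos C hC).le (hCfacts C hC).2.le) (hindnn C s)
  have hmemsupp : ∀ s, ∀ C ∈ 𝒞, s ∈ C → 0 < P s := by
    intro s C hC hsC
    apply Finset.sum_pos'
    · intro C' hC'
      rw [hind C']
      exact mul_nonneg (div_nonneg (hμpos C' hC').le (hCfacts C' hC').2.le) (hindnn C' s)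
    · refine ⟨C, hC, ?_⟩
      simp only [hind C, Set.indicator_of_mem hsC]
      exact div_pos (mul_pos (hμpos C hC) (hPt_pos s (h𝒟 s ((hCfacts C hC).1 hsC))))
        (hCfacts C hC).2
  -- support characterization
  have hsupp : {s | P s ≠ 0} = ⋃ C ∈ 𝒞, (C : Set (List D)) := by
    ext s
    simp only [Set.mem_setOf_eq, Set.mem_iUnion]
    constructor
    · intro hs
      obtain ⟨C, hC, hne⟩ := Finset.exists_ne_zero_of_sum_ne_zero hs
      refine ⟨C, hC, ?_⟩
      by_contra hsC
      rw [Set.indicator_of_notMem hsC] at hne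
      exact hne rfl
    · rintro ⟨C, hC, hsC⟩
      exact ne_of_gt (hmemsupp s C hC hsC)
  refine ⟨hPnonneg, ?_, ?_, ?_, hsupp⟩
  -- total mass 1
  · rw [Summable.tsum_finsetSum (fun C _ => hsummC C)]
    rw [← hμ1]
    apply Finset.sum_congr rfl
    intro C hC
    rw [hind C, tsum_mul_left]
    have hZ : Z C ≠ 0 := ne_of_gt (hCfacts C hC).2
    show μ C / Z C * Z C = μ C
    field_simp
  -- support in 𝒟
  · intro s hs
    have : s ∈ {s | P s ≠ 0} := hs
    rw [hsupp] at this
    simp only [Set.mem_iUnion] at this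
    obtain ⟨C, hC, hsC⟩ := this
    exact (hCfacts C hC).1 hsC
  -- Markov property
  · intro B hB
    refine ⟨fun y y' => Real.log ((y'.map ξ).prod) - Real.log ((y.map ξ).prod), ?_, ?_⟩
    · intro y _ y' _; ring
    · intro x₁ x₂ y hy y' hy' hs hs'
      have hrel : SubstRel 𝒟 𝓑 (x₁ ++ y ++ x₂) (x₁ ++ y' ++ x₂) :=
        ⟨hs, hs', x₁, x₂, B, hB, y, hy, y', hy', rfl, rfl⟩
      have hexp : Real.exp (Real.log ((y'.map ξ).prod) - Real.log ((y.map ξ).prod))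
          = (y'.map ξ).prod / (y.map ξ).prod := by
        rw [Real.exp_sub, Real.exp_log (hprodpos y'), Real.exp_log (hprodpos y)]
      have hPtratio : Pt (x₁ ++ y' ++ x₂) = Pt (x₁ ++ y ++ x₂) *
          Real.exp (Real.log ((y'.map ξ).prod) - Real.log ((y.map ξ).prod)) := by
        rw [hPt_eq _ (h𝒟 _ hs), hPt_eq _ (h𝒟 _ hs'), hexp]
        simp only [List.map_append, List.prod_append]
        have hy0 : (y.map ξ).prod ≠ 0 := ne_of_gt (hprodpos y)
        field_simp
      show P (x₁ ++ y' ++ x₂) = P (x₁ ++ y ++ x₂) * Real.exp _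
      rw [hPdef]
      simp only
      rw [Finset.sum_mul]
      apply Finset.sum_congr rfl
      intro C hC
      have hiff := hclosed C hC _ _ hrel
      by_cases hm : x₁ ++ y ++ x₂ ∈ C
      · rw [Set.indicator_of_mem (hiff.1 hm), Set.indicator_of_mem hm, hPtratio]
        ring
      · rw [Set.indicator_of_notMem (fun h => hm (hiff.2 h)),
          Set.indicator_of_notMem hm, zero_mul]
end

section
/- If two families 𝓑 and 𝓑' of subsets of D⁺ define the same class of Markov substitute measures on a domain 𝒟 (𝔐(𝒟,𝓑) = 𝔐(𝒟,𝓑')), then the equivalence relations ∼_𝓑 and ∼_𝓑' on 𝒟 coincide, i.e., the partitions 𝒟/∼_𝓑 and 𝒟/∼_𝓑' are equal. -/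
/-- `P ∈ 𝔐(𝒟, 𝓑)`: `P` is a `𝓑`-Markov substitute probability measure on `𝒟`. -/
def IsMSM {D : Type*} (𝒟 : Set (List D)) (𝓑 : Set (Set (List D)))
    (P : List D → ℝ) : Prop :=
  (∀ s, 0 ≤ P s) ∧ (∑' s : List D, P s) = 1 ∧ (∀ s, P s ≠ 0 → s ∈ 𝒟) ∧
    ∀ B ∈ 𝓑, IsMarkovSet 𝒟 P B

lemma msm_step {D : Type*} {𝒟 : Set (List D)} {𝓑 : Set (Set (List D))} {P : List D → ℝ}
    (hP : IsMSM 𝒟 𝓑 P) {a b : List D} (h : SubstRel 𝒟 𝓑 a b) (ha : P a ≠ 0) : P b ≠ 0 := by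
  obtain ⟨hA, hB, x₁, x₂, B, hBmem, y, hy, y', hy', rfl, rfl⟩ := h
  obtain ⟨β, _, hmain⟩ := hP.2.2.2 B hBmem
  rw [hmain x₁ x₂ y hy y' hy' hA hB]
  exact mul_ne_zero ha (Real.exp_ne_zero _)

lemma msm_eqvGen {D : Type*} {𝒟 : Set (List D)} {𝓑 : Set (Set (List D))} {P : List D → ℝ}
    (hP : IsMSM 𝒟 𝓑 P) {a b : List D} (h : Relation.EqvGen (SubstRel 𝒟 𝓑) a b)
    (ha : P a ≠ 0) : P b ≠ 0 := by
  have key : P a ≠ 0 ↔ P b ≠ 0 := by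
    clear ha
    induction h with
    | rel x y hxy =>
        constructor
        · exact msm_step hP hxy
        · refine msm_step hP ?_
          obtain ⟨h1, h2, x₁, x₂, B, hB, y₀, hy₀, y₁, hy₁, e1, e2⟩ := hxy
          exact ⟨h2, h1, x₁, x₂, B, hB, y₁, hy₁, y₀, hy₀, e2, e1⟩
    | refl => exact Iff.rfl
    | symm _ _ _ ih => exact ih.symm
    | trans _ _ _ _ _ ih1 ih2 => exact ih1.trans ih2
  exact key.mp ha

theorem stmt12 {D : Type*} [Fintype D]
    (𝒟 : Set (List D)) (𝓑 𝓑' : Set (Set (List D)))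
    (heq : ∀ P : List D → ℝ, IsMSM 𝒟 𝓑 P ↔ IsMSM 𝒟 𝓑' P)
    (hreal : ∀ s₀ ∈ 𝒟, ∃ P : List D → ℝ, IsMSM 𝒟 𝓑 P ∧
      {s | P s ≠ 0} = {t | Relation.EqvGen (SubstRel 𝒟 𝓑) s₀ t})
    (hreal' : ∀ s₀ ∈ 𝒟, ∃ P : List D → ℝ, IsMSM 𝒟 𝓑' P ∧
      {s | P s ≠ 0} = {t | Relation.EqvGen (SubstRel 𝒟 𝓑') s₀ t}) :
    ∀ s ∈ 𝒟, ∀ s' ∈ 𝒟,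
      (Relation.EqvGen (SubstRel 𝒟 𝓑) s s' ↔ Relation.EqvGen (SubstRel 𝒟 𝓑') s s') := by
  intro s hs s' _
  constructor
  · intro h
    obtain ⟨P, hP, hsupp⟩ := hreal' s hs
    have hPB : IsMSM 𝒟 𝓑 P := (heq P).mpr hP
    have hs0 : P s ≠ 0 := by
      have : s ∈ {t | Relation.EqvGen (SubstRel 𝒟 𝓑') s t} := Relation.EqvGen.refl s
      rw [← hsupp] at this; exact this
    have : P s' ≠ 0 := msm_eqvGen hPB h hs0
    have : s' ∈ {t | Relation.EqvGen (SubstRel 𝒟 𝓑') s t} := hsupp ▸ this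
    exact this
  · intro h
    obtain ⟨P, hP, hsupp⟩ := hreal s hs
    have hPB : IsMSM 𝒟 𝓑' P := (heq P).mp hP
    have hs0 : P s ≠ 0 := by
      have : s ∈ {t | Relation.EqvGen (SubstRel 𝒟 𝓑) s t} := Relation.EqvGen.refl s
      rw [← hsupp] at this; exact this
    have : P s' ≠ 0 := msm_eqvGen hPB h hs0
    have : s' ∈ {t | Relation.EqvGen (SubstRel 𝒟 𝓑) s t} := hsupp ▸ this
    exact this
end

section
/- A probability measure P supported in 𝒟 is 𝓑-Markov on 𝒟 if and only if it is 𝓟'-Markov on 𝒟, where 𝓟' = { {y, y'} : y ≠ y', y, y' ∈ B for some B ∈ 𝓑 } is the set of all unordered pairs drawn from members of 𝓑. -/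
theorem stmt13 {D : Type*} [Fintype D] (𝒟 : Set (List D)) (P : List D → ℝ)
    (𝓑 : Set (Set (List D))) :
    (∀ B ∈ 𝓑, IsMarkovSet 𝒟 P B) ↔
      (∀ y y' : List D, y ≠ y' → (∃ B ∈ 𝓑, y ∈ B ∧ y' ∈ B) →
        IsMarkovSet 𝒟 P {y, y'}) := by
  classical
  constructor
  · rintro h y y' _ ⟨B, hB, hy, hy'⟩
    obtain ⟨β, hskew, heq⟩ := h B hB
    refine ⟨β, ?_, ?_⟩
    · intro a ha b hb
      have haB : a ∈ B := by rcases ha with rfl | rfl; exacts [hy, hy']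
      have hbB : b ∈ B := by rcases hb with rfl | rfl; exacts [hy, hy']
      exact hskew a haB b hbB
    · intro x₁ x₂ a ha b hb h1 h2
      have haB : a ∈ B := by rcases ha with rfl | rfl; exacts [hy, hy']
      have hbB : b ∈ B := by rcases hb with rfl | rfl; exacts [hy, hy']
      exact heq x₁ x₂ a haB b hbB h1 h2
  · intro h B hB
    -- choice of pair exponents
    set c : List D → List D → List D → List D → ℝ := fun y y' =>
      if h' : y ≠ y' ∧ ∃ B ∈ 𝓑, y ∈ B ∧ y' ∈ B then
        Classical.choose (h y y' h'.1 h'.2) else fun _ _ => 0 with hc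
    have cspec : ∀ y y', ∀ h' : y ≠ y' ∧ ∃ B ∈ 𝓑, y ∈ B ∧ y' ∈ B,
        ∀ (x₁ x₂ : List D), x₁ ++ y ++ x₂ ∈ 𝒟 → x₁ ++ y' ++ x₂ ∈ 𝒟 →
        P (x₁ ++ y' ++ x₂) = P (x₁ ++ y ++ x₂) * Real.exp (c y y' y y') := by
      intro y y' h' x₁ x₂ h1 h2
      have hcv : c y y' = Classical.choose (h y y' h'.1 h'.2) := dif_pos h'
      rw [hcv]
      exact (Classical.choose_spec (h y y' h'.1 h'.2)).2 x₁ x₂ y (by left; rfl)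
        y' (by right; rfl) h1 h2
    refine ⟨fun y y' => if y = y' then 0 else (c y y' y y' - c y' y y' y) / 2, ?_, ?_⟩
    · intro y _ y' _
      by_cases hyy : y = y'
      · simp [hyy]
      · simp only [if_neg hyy, if_neg (Ne.symm hyy)]
        ring
    · intro x₁ x₂ y hy y' hy' h1 h2
      by_cases hyy : y = y'
      · subst hyy; simp
      · have h'1 : y ≠ y' ∧ ∃ B ∈ 𝓑, y ∈ B ∧ y' ∈ B := ⟨hyy, B, hB, hy, hy'⟩
        have h'2 : y' ≠ y ∧ ∃ B ∈ 𝓑, y' ∈ B ∧ y ∈ B := ⟨Ne.symm hyy, B, hB, hy', hy⟩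
        have e1 := cspec y y' h'1 x₁ x₂ h1 h2
        have e2 := cspec y' y h'2 x₁ x₂ h2 h1
        simp only [if_neg hyy]
        by_cases hP : P (x₁ ++ y ++ x₂) = 0
        · rw [e1, hP]; ring
        · -- from e1, e2: exp (a + b) = 1 so a + b = 0
          have key : c y y' y y' + c y' y y' y = 0 := by
            have : P (x₁ ++ y ++ x₂) =
                P (x₁ ++ y ++ x₂) * Real.exp (c y y' y y' + c y' y y' y) := by
              rw [Real.exp_add, ← mul_assoc, ← e1, e2]
            have h1' : Real.exp (c y y' y y' + c y' y y' y) = 1 := by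
              exact mul_left_cancel₀ hP (this.symm.trans (mul_one _).symm)
            have := congrArg Real.log h1'
            simpa [Real.log_exp] using this
          have : (c y y' y y' - c y' y y' y) / 2 = c y y' y y' := by linarith
          rw [this]; exact e1
end

section
/- Let D = {a, b, c} and 𝓑 = {{[a,b],[a]}, {[b,c],[c]}}, and let C₁ = { a·bⁿ·c : n ∈ ℕ } ⊆ D⁺. For any probability measure P on D⁺ supported in C₁ that is 𝓑-Markov on domain D⁺, there exists r ∈ (0,1) such that P(a·bⁿ·c) = r·(1−r)ⁿ for all n ∈ ℕ. Conversely every such geometric measure is 𝓑-Markov on D⁺. -/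
/-- With the dictionary `D = {a, b, c}` encoded as `Fin 3` (`a = 0`, `b = 1`, `c = 2`),
the string `a bⁿ c`. -/
def wABC (n : ℕ) : List (Fin 3) := [0] ++ List.replicate n 1 ++ [2]

/-- The component `C₁ = { a bⁿ c : n ∈ ℕ }`. -/
def C1 : Set (List (Fin 3)) := {s | ∃ n, s = wABC n}

/-- The family `𝓑 = { {ab, a}, {bc, c} }`. -/
def Bfam : Set (Set (List (Fin 3))) := {{[0, 1], [0]}, {[1, 2], [2]}}

/-- The domain `D⁺` of all nonempty strings. -/
def Dplus : Set (List (Fin 3)) := {s | s ≠ []}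

lemma mem0 (x₁ x₂ : List (Fin 3)) :
    x₁ ++ [0] ++ x₂ ∈ C1 ↔ x₁ = [] ∧ ∃ n, x₂ = List.replicate n 1 ++ [2] := by
  constructor
  · rintro ⟨n, h⟩
    rcases x₁ with _ | ⟨d, l⟩
    · refine ⟨rfl, n, ?_⟩
      simpa [wABC] using h
    · exfalso
      simp only [wABC, List.cons_append, List.nil_append, List.cons.injEq] at h
      obtain ⟨hd, h⟩ := h
      have h0 : (0 : Fin 3) ∈ List.replicate n 1 ++ [2] := by
        rw [← h]; simp
      simp [List.mem_replicate] at h0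
  · rintro ⟨rfl, n, rfl⟩
    exact ⟨n, by simp [wABC]⟩

lemma mem01 (x₁ x₂ : List (Fin 3)) :
    x₁ ++ [0, 1] ++ x₂ ∈ C1 ↔ x₁ = [] ∧ ∃ n, x₂ = List.replicate n 1 ++ [2] := by
  constructor
  · rintro ⟨n, h⟩
    rcases x₁ with _ | ⟨d, l⟩
    · simp only [wABC, List.nil_append, List.cons_append, List.cons.injEq] at h
      obtain ⟨-, h⟩ := h
      rcases n with _ | n
      · simp at h
      · rw [List.replicate_succ] at h
        simp only [List.cons_append, List.cons.injEq] at h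
        exact ⟨rfl, n, h.2⟩
    · exfalso
      simp only [wABC, List.cons_append, List.nil_append, List.cons.injEq] at h
      obtain ⟨hd, h⟩ := h
      have h0 : (0 : Fin 3) ∈ List.replicate n 1 ++ [2] := by
        rw [← h]; simp
      simp [List.mem_replicate] at h0
  · rintro ⟨rfl, n, rfl⟩
    refine ⟨n + 1, ?_⟩
    simp [wABC, List.replicate_succ]

lemma mem2 (x₁ x₂ : List (Fin 3)) :
    x₁ ++ [2] ++ x₂ ∈ C1 ↔ (∃ n, x₁ = 0 :: List.replicate n 1) ∧ x₂ = [] := by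
  constructor
  · rintro ⟨n, h⟩
    have hrev := congrArg List.reverse h
    simp only [wABC, List.reverse_append, List.reverse_cons, List.reverse_nil,
      List.nil_append, List.reverse_replicate, List.append_assoc, List.cons_append] at hrev
    -- hrev : x₂.reverse ++ 2 :: x₁.reverse = 2 :: (replicate n 1 ++ [0])
    rcases hx2 : x₂.reverse with _ | ⟨d, l⟩
    · have hx2' : x₂ = [] := by
        have := congrArg List.reverse hx2
        simpa using this
      subst hx2'
      refine ⟨⟨n, ?_⟩, rfl⟩
      simp only [List.append_nil] at h
      have : x₁ ++ [2] = (0 :: List.replicate n 1) ++ [2] := by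
        simpa [wABC, List.append_assoc] using h
      exact List.append_cancel_right this
    · exfalso
      rw [hx2] at hrev
      simp only [List.cons_append, List.cons.injEq] at hrev
      obtain ⟨hd, hrev⟩ := hrev
      have h2 : (2 : Fin 3) ∈ List.replicate n 1 ++ [0] := by
        rw [← hrev]; simp
      simp [List.mem_replicate] at h2
  · rintro ⟨⟨n, rfl⟩, rfl⟩
    exact ⟨n, by simp [wABC]⟩

lemma mem12 (x₁ x₂ : List (Fin 3)) :
    x₁ ++ [1, 2] ++ x₂ ∈ C1 ↔ (∃ n, x₁ = 0 :: List.replicate n 1) ∧ x₂ = [] := by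
  constructor
  · rintro ⟨n, h⟩
    have hrev := congrArg List.reverse h
    simp only [wABC, List.reverse_append, List.reverse_cons, List.reverse_nil,
      List.nil_append, List.reverse_replicate, List.append_assoc, List.cons_append] at hrev
    rcases hx2 : x₂.reverse with _ | ⟨d, l⟩
    · have hx2' : x₂ = [] := by
        have := congrArg List.reverse hx2
        simpa using this
      subst hx2'
      simp only [List.append_nil] at h
      have h' : (x₁ ++ [1]) ++ [2] = ([0] ++ List.replicate n 1) ++ [2] := by
        simpa [wABC, List.append_assoc] using h
      have h'' := List.append_cancel_right h'
      rcases n with _ | m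
      · exfalso
        simp at h''
        have := congrArg List.getLast? h''
        simp at this
      · rw [List.replicate_succ'] at h''
        have h3 : x₁ ++ [1] = ([0] ++ List.replicate m 1) ++ [1] := by
          simpa [List.append_assoc] using h''
        refine ⟨⟨m, ?_⟩, rfl⟩
        simpa using List.append_cancel_right h3
    · exfalso
      rw [hx2] at hrev
      simp only [List.cons_append, List.cons.injEq] at hrev
      obtain ⟨hd, hrev⟩ := hrev
      have h2 : (2 : Fin 3) ∈ (1 : Fin 3) :: (List.replicate n 1 ++ [0]) := by
        rw [← hrev]; simp
      simp [List.mem_replicate] at h2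
  · rintro ⟨⟨n, rfl⟩, rfl⟩
    refine ⟨n + 1, ?_⟩
    simp [wABC, List.replicate_succ']

theorem stmt15 :
    (∀ P : List (Fin 3) → ℝ, (∀ s, 0 ≤ P s) → (∑' s : List (Fin 3), P s) = 1 →
      (∀ s, P s ≠ 0 → s ∈ C1) → (∀ B ∈ Bfam, IsMarkovSet Dplus P B) →
      ∃ r ∈ Set.Ioo (0 : ℝ) 1, ∀ n : ℕ, P (wABC n) = r * (1 - r) ^ n) ∧
    (∀ r ∈ Set.Ioo (0 : ℝ) 1, ∀ P : List (Fin 3) → ℝ,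
      (∀ n : ℕ, P (wABC n) = r * (1 - r) ^ n) → (∀ s, s ∉ C1 → P s = 0) →
      ∀ B ∈ Bfam, IsMarkovSet Dplus P B) := by
  constructor
  · intro P hpos hsum hsupp hmark
    obtain ⟨β, hskew, hβ⟩ := hmark {[0, 1], [0]} (Or.inl rfl)
    set t := Real.exp (β [0] [0, 1]) with ht
    have ht0 : 0 < t := Real.exp_pos _
    have step : ∀ n : ℕ, P (wABC (n + 1)) = P (wABC n) * t := by
      intro n
      have := hβ [] (List.replicate n 1 ++ [2]) [0] (Or.inr rfl) [0, 1] (Or.inl rfl)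
        (by simp [Dplus]) (by simp [Dplus])
      have e1 : ([] : List (Fin 3)) ++ [0, 1] ++ (List.replicate n 1 ++ [2]) = wABC (n + 1) := by
        simp [wABC, List.replicate_succ]
      have e2 : ([] : List (Fin 3)) ++ [0] ++ (List.replicate n 1 ++ [2]) = wABC n := by
        simp [wABC]
      rw [e1, e2] at this
      exact this
    have hn : ∀ n : ℕ, P (wABC n) = P (wABC 0) * t ^ n := by
      intro n
      induction n with
      | zero => simp
      | succ m ih => rw [step m, ih, pow_succ]; ring
    have hinj : Function.Injective wABC := by
      intro m n h
      have := congrArg List.length h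
      simpa [wABC] using this
    have hs : ∑' n : ℕ, P (wABC n) = 1 := by
      rw [← hsum]
      refine hinj.tsum_eq ?_
      intro s hssupp
      obtain ⟨n, rfl⟩ := hsupp s hssupp
      exact ⟨n, rfl⟩
    have hs2 : ∑' n : ℕ, P (wABC 0) * t ^ n = 1 := by
      rw [← hs]; exact tsum_congr fun n => (hn n).symm
    have hP0 : 0 < P (wABC 0) := by
      rcases (hpos (wABC 0)).lt_or_eq with h | h
      · exact h
      · exfalso
        rw [← h] at hs2
        simp at hs2
    have hsummable : Summable (fun n : ℕ => P (wABC 0) * t ^ n) := by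
      by_contra hcon
      rw [tsum_eq_zero_of_not_summable hcon] at hs2
      norm_num at hs2
    have hsg : Summable (fun n : ℕ => t ^ n) :=
      (summable_mul_left_iff hP0.ne').mp hsummable
    have ht1 : t < 1 := by
      have := summable_geometric_iff_norm_lt_one.mp hsg
      rwa [Real.norm_eq_abs, abs_of_pos ht0] at this
    rw [tsum_mul_left, tsum_geometric_of_lt_one ht0.le ht1] at hs2
    have hne : (1 : ℝ) - t ≠ 0 := by linarith
    have hP0eq : P (wABC 0) = 1 - t := by
      field_simp at hs2
      linarith
    refine ⟨1 - t, ⟨by linarith, by linarith⟩, ?_⟩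
    intro n
    rw [hn n, hP0eq]
    ring_nf
  · rintro r ⟨hr0, hr1⟩ P hP h0 B hB
    have hr1' : (0 : ℝ) < 1 - r := by linarith
    rcases hB with hB | hB
    · -- B = {[0,1],[0]}
      subst hB
      refine ⟨fun y y' => (if y' = [0, 1] then Real.log (1 - r) else 0) -
        (if y = [0, 1] then Real.log (1 - r) else 0), fun _ _ _ _ => by ring, ?_⟩
      have ratio : ∀ x₁ x₂ : List (Fin 3),
          P (x₁ ++ [0, 1] ++ x₂) = P (x₁ ++ [0] ++ x₂) * (1 - r) := by
        intro x₁ x₂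
        by_cases hc : x₁ ++ [0] ++ x₂ ∈ C1
        · obtain ⟨rfl, n, rfl⟩ := (mem0 x₁ x₂).mp hc
          have e1 : ([] : List (Fin 3)) ++ [0, 1] ++ (List.replicate n 1 ++ [2]) = wABC (n + 1) := by
            simp [wABC, List.replicate_succ]
          have e2 : ([] : List (Fin 3)) ++ [0] ++ (List.replicate n 1 ++ [2]) = wABC n := by
            simp [wABC]
          rw [e1, e2, hP, hP, pow_succ]
          ring
        · have hc' : x₁ ++ [0, 1] ++ x₂ ∉ C1 := fun h =>
            hc ((mem0 x₁ x₂).mpr ((mem01 x₁ x₂).mp h))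
          rw [h0 _ hc, h0 _ hc']
          ring
      rintro x₁ x₂ y (rfl | rfl) y' (rfl | rfl) _ _
      · simp
      · beta_reduce
        rw [if_neg (by decide : ¬([0] : List (Fin 3)) = [0, 1]), if_pos rfl, zero_sub,
          Real.exp_neg, Real.exp_log hr1', ratio, mul_assoc,
          mul_inv_cancel₀ hr1'.ne', mul_one]
      · beta_reduce
        rw [if_pos rfl, if_neg (by decide : ¬([0] : List (Fin 3)) = [0, 1]), sub_zero,
          Real.exp_log hr1', ratio]
      · simp
    · -- B = {[1,2],[2]}
      have hB' : B = {[1, 2], [2]} := hB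
      subst hB'
      refine ⟨fun y y' => (if y' = [1, 2] then Real.log (1 - r) else 0) -
        (if y = [1, 2] then Real.log (1 - r) else 0), fun _ _ _ _ => by ring, ?_⟩
      have ratio : ∀ x₁ x₂ : List (Fin 3),
          P (x₁ ++ [1, 2] ++ x₂) = P (x₁ ++ [2] ++ x₂) * (1 - r) := by
        intro x₁ x₂
        by_cases hc : x₁ ++ [2] ++ x₂ ∈ C1
        · obtain ⟨⟨n, rfl⟩, rfl⟩ := (mem2 x₁ x₂).mp hc
          have e1 : ((0 : Fin 3) :: List.replicate n 1) ++ [1, 2] ++ ([] : List (Fin 3))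
              = wABC (n + 1) := by
            simp [wABC, List.replicate_succ']
          have e2 : ((0 : Fin 3) :: List.replicate n 1) ++ [2] ++ ([] : List (Fin 3))
              = wABC n := by
            simp [wABC]
          rw [e1, e2, hP, hP, pow_succ]
          ring
        · have hc' : x₁ ++ [1, 2] ++ x₂ ∉ C1 := fun h =>
            hc ((mem2 x₁ x₂).mpr ((mem12 x₁ x₂).mp h))
          rw [h0 _ hc, h0 _ hc']
          ring
      rintro x₁ x₂ y (rfl | rfl) y' (rfl | rfl) _ _
      · simp
      · beta_reduce
        rw [if_neg (by decide : ¬([2] : List (Fin 3)) = [1, 2]), if_pos rfl, zero_sub,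
          Real.exp_neg, Real.exp_log hr1', ratio, mul_assoc,
          mul_inv_cancel₀ hr1'.ne', mul_one]
      · beta_reduce
        rw [if_pos rfl, if_neg (by decide : ¬([2] : List (Fin 3)) = [1, 2]), sub_zero,
          Real.exp_log hr1', ratio]
      · simp
end

section
/- On the state space D^L with the family 𝓑 = { α((a,b), D) : (a,b) ∈ D² } of substitute sets of middle letters, the equivalence classes of ∼_𝓑 on D^L are exactly the sets α((a,b), D^{L−2}) = { strings of length L starting with a and ending with b }, for (a,b) ∈ D². -/
/-- One-step substitution of the middle letter of a length-3 block. -/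
def TripleRel {D : Type*} (w w' : List D) : Prop :=
  ∃ (x₁ x₂ : List D) (a y y' b : D),
    w = x₁ ++ [a, y, b] ++ x₂ ∧ w' = x₁ ++ [a, y', b] ++ x₂

lemma tripleRel_inv {D : Type*} {w w' : List D} (h : TripleRel w w') :
    w.head? = w'.head? ∧ w.getLast? = w'.getLast? := by
  obtain ⟨x₁, x₂, a, y, y', b, rfl, rfl⟩ := h
  constructor
  · cases x₁ <;> simp
  · rcases List.eq_nil_or_concat x₂ with rfl | ⟨x₃, c, rfl⟩
    · simp [List.getLast?_append]
    · simp [List.getLast?_append, List.getLast?_concat]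

lemma tripleRel_single {D : Type*} (p s : List D) (hp : p ≠ []) (hs : s ≠ [])
    (y y' : D) : TripleRel (p ++ [y] ++ s) (p ++ [y'] ++ s) := by
  obtain ⟨p₀, a, rfl⟩ := (List.eq_nil_or_concat p).resolve_left hp
  obtain ⟨b, s₂, rfl⟩ := List.exists_cons_of_ne_nil hs
  exact ⟨p₀, s₂, a, y, y', b, by simp, by simp⟩

lemma eqvGen_mid {D : Type*} : ∀ (m m' : List D), m.length = m'.length →
    ∀ (p s : List D), p ≠ [] → s ≠ [] →
    Relation.EqvGen (TripleRel (D := D)) (p ++ m ++ s) (p ++ m' ++ s) := by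
  intro m
  induction m with
  | nil =>
    intro m' h p s _ _
    cases m' with
    | nil => exact Relation.EqvGen.refl _
    | cons _ _ => simp at h
  | cons y t ih =>
    intro m' h p s hp hs
    obtain ⟨y', t', rfl⟩ := List.exists_cons_of_ne_nil (l := m')
      (by rintro rfl; simp at h)
    simp at h
    have step : TripleRel (p ++ [y] ++ (t ++ s)) (p ++ [y'] ++ (t ++ s)) :=
      tripleRel_single p (t ++ s) hp (by simp [hs]) y y'
    have h1 : Relation.EqvGen (TripleRel (D := D)) (p ++ (y :: t) ++ s)
        (p ++ (y' :: t) ++ s) := by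
      have := Relation.EqvGen.rel _ _ step
      simpa [List.append_assoc] using this
    have h2 : Relation.EqvGen (TripleRel (D := D)) ((p ++ [y']) ++ t ++ s)
        ((p ++ [y']) ++ t' ++ s) := ih t' h (p ++ [y']) s (by simp) hs
    refine Relation.EqvGen.trans _ _ _ h1 ?_
    simpa [List.append_assoc] using h2

theorem stmt18 {D : Type*} [Fintype D] (hcard : 2 ≤ Fintype.card D)
    (L : ℕ) (hL : 3 ≤ L) :
    ∀ w w' : List D, w.length = L → w'.length = L →
      (Relation.EqvGen (TripleRel (D := D)) w w' ↔
        (w.head? = w'.head? ∧ w.getLast? = w'.getLast?)) := by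
  intro w w' hw hw'
  constructor
  · intro h
    clear hw hw'
    induction h with
    | rel _ _ h => exact tripleRel_inv h
    | refl _ => exact ⟨rfl, rfl⟩
    | symm _ _ _ ih => exact ⟨ih.1.symm, ih.2.symm⟩
    | trans _ _ _ _ _ ih1 ih2 => exact ⟨ih1.1.trans ih2.1, ih1.2.trans ih2.2⟩
  · rintro ⟨hhead, hlast⟩
    -- decompose w = a :: m ++ [b]
    obtain ⟨a, t, rfl⟩ := List.exists_cons_of_ne_nil (l := w)
      (by rintro rfl; simp at hw; omega)
    obtain ⟨m, b, rfl⟩ := (List.eq_nil_or_concat t).resolve_left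
      (by rintro rfl; simp at hw; omega)
    obtain ⟨a', t', rfl⟩ := List.exists_cons_of_ne_nil (l := w')
      (by rintro rfl; simp at hw'; omega)
    obtain ⟨m', b', rfl⟩ := (List.eq_nil_or_concat t').resolve_left
      (by rintro rfl; simp at hw'; omega)
    simp only [List.concat_eq_append] at hw hw' hlast ⊢
    simp only [List.head?_cons, Option.some.injEq] at hhead
    subst hhead
    have hb : b = b' := by
      have h1 : (a :: (m ++ [b])).getLast? = some b := by
        rw [show a :: (m ++ [b]) = (a :: m) ++ [b] from rfl, List.getLast?_concat]
      have h2 : (a :: (m' ++ [b'])).getLast? = some b' := by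
        rw [show a :: (m' ++ [b']) = (a :: m') ++ [b'] from rfl, List.getLast?_concat]
      rw [h1, h2] at hlast; exact Option.some.inj hlast
    subst hb
    have hlen : m.length = m'.length := by
      simp at hw hw'; omega
    have := eqvGen_mid m m' hlen [a] [b] (by simp) (by simp)
    simpa using this
end

section
/- Let P be a probability measure on D^L (L ≥ 5, |D| ≥ 1) such that every set {[a,z,b] : z ∈ D}, (a,b) ∈ D², is a Markov substitute set of P with exponent β. Then for a fixed c ∈ D and all (a,y,y',b) ∈ D⁴: β([a,y,b],[a,y',b]) = β([a,c,c],[a,y',c]) + β([y',c,c],[y',b,c]) − β([a,c,c],[a,y,c]) − β([y,c,c],[y,b,c]). -/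
theorem stmt19 {D : Type*} [Fintype D] (L : ℕ) (hL : 5 ≤ L)
    (P : List D → ℝ) (β : List D → List D → ℝ)
    (hpos : ∀ w : List D, w.length = L → 0 < P w)
    (hskew : ∀ u v : List D, u.length = 3 → v.length = 3 → β u v = - β v u)
    (hβ : ∀ (a y y' b : D) (x₁ x₂ : List D), x₁.length + x₂.length = L - 3 →
      P (x₁ ++ [a, y', b] ++ x₂)
        = P (x₁ ++ [a, y, b] ++ x₂) * Real.exp (β [a, y, b] [a, y', b]))
    (c : D) :
    ∀ a y y' b : D,
      β [a, y, b] [a, y', b]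
        = β [a, c, c] [a, y', c] + β [y', c, c] [y', b, c]
          - β [a, c, c] [a, y, c] - β [y, c, c] [y, b, c] := by
  intro a y y' b
  set r : List D := List.replicate (L - 5) c with hr
  have hrlen : r.length = L - 5 := by simp [hr]
  have hlen1 : ([c] : List D).length + ([c] ++ r).length = L - 3 := by
    simp [hrlen]; omega
  have hlen2 : ([c, a] : List D).length + r.length = L - 3 := by
    simp [hrlen]; omega
  have e1 := hβ a c y c [c] ([c] ++ r) hlen1
  have e1' := hβ a c y' c [c] ([c] ++ r) hlen1
  have e2 := hβ y c b c [c, a] r hlen2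
  have e2' := hβ y' c b c [c, a] r hlen2
  have e0 := hβ a y y' b [c] ([c] ++ r) hlen1
  simp only [List.append_assoc, List.cons_append, List.nil_append] at e1 e1' e2 e2' e0
  have hA : 0 < P (c :: a :: c :: c :: c :: r) := by
    refine hpos _ ?_
    simp [hrlen]; omega
  have h1 : P (c :: a :: y' :: b :: c :: r)
      = P (c :: a :: c :: c :: c :: r) * Real.exp (β [a, c, c] [a, y, c])
        * Real.exp (β [y, c, c] [y, b, c]) * Real.exp (β [a, y, b] [a, y', b]) := by
    rw [e0, e2, e1]
  have h2 : P (c :: a :: y' :: b :: c :: r)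
      = P (c :: a :: c :: c :: c :: r) * Real.exp (β [a, c, c] [a, y', c])
        * Real.exp (β [y', c, c] [y', b, c]) := by
    rw [e2', e1']
  have h3 : Real.exp (β [a, c, c] [a, y, c] + β [y, c, c] [y, b, c] + β [a, y, b] [a, y', b])
      = Real.exp (β [a, c, c] [a, y', c] + β [y', c, c] [y', b, c]) := by
    have h := h1.symm.trans h2
    rw [Real.exp_add, Real.exp_add, Real.exp_add]
    have hA' : P (c :: a :: c :: c :: c :: r) ≠ 0 := ne_of_gt hA
    apply mul_left_cancel₀ hA'
    linear_combination h
  have := Real.exp_injective h3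
  linarith
end
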